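/- Let H be the real Heisenberg group (ℝ³ with multiplication (a,b,x)*(c,d,y) = (a+c, b+d, x+y+ad−bc)) and Z = {0}²×ℤ its central discrete subgroup. Then KO(H/Z) equals the central circle ({0}²×ℝ)/Z ≅ ℝ/ℤ. -/

import Mathlib

def KO (G : Type*) [Group G] [TopologicalSpace G] : Subgroup G :=
  ⨅ (n : ℕ) (ρ : G →* GL (Fin n) ℂ) (_ : Continuous ρ), ρ.ker

/-- The real Heisenberg group: `ℝ³` with `(a,b,x)*(c,d,y) = (a+c, b+d, x+y+ad-bc)`. -/
@[ext] structure Heis where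
  a : ℝ
  b : ℝ
  x : ℝ

namespace Heis

instance : Mul Heis :=
  ⟨fun p q => ⟨p.a + q.a, p.b + q.b, p.x + q.x + p.a * q.b - p.b * q.a⟩⟩
instance : One Heis := ⟨⟨0, 0, 0⟩⟩
instance : Inv Heis := ⟨fun p => ⟨-p.a, -p.b, -p.x⟩⟩

@[simp] lemma mul_a (p q : Heis) : (p * q).a = p.a + q.a := rfl
@[simp] lemma mul_b (p q : Heis) : (p * q).b = p.b + q.b := rfl
@[simp] lemma mul_x (p q : Heis) : (p * q).x = p.x + q.x + p.a * q.b - p.b * q.a := rfl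
@[simp] lemma one_a : (1 : Heis).a = 0 := rfl
@[simp] lemma one_b : (1 : Heis).b = 0 := rfl
@[simp] lemma one_x : (1 : Heis).x = 0 := rfl
@[simp] lemma inv_a (p : Heis) : p⁻¹.a = -p.a := rfl
@[simp] lemma inv_b (p : Heis) : p⁻¹.b = -p.b := rfl
@[simp] lemma inv_x (p : Heis) : p⁻¹.x = -p.x := rfl

instance : Group Heis where
  mul_assoc p q r := by ext <;> simp <;> ring
  one_mul p := by ext <;> simp
  mul_one p := by ext <;> simp
  inv_mul_cancel p := by ext <;> simp <;> ring

/-- Topology of `ℝ³`, transported to `Heis`. -/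
instance : TopologicalSpace Heis :=
  TopologicalSpace.induced (fun p : Heis => (p.a, p.b, p.x)) inferInstance

/-- The central subgroup `{0}² × ℤ`. -/
def Z : Subgroup Heis where
  carrier := {p | p.a = 0 ∧ p.b = 0 ∧ ∃ n : ℤ, p.x = n}
  one_mem' := ⟨rfl, rfl, 0, by simp⟩
  mul_mem' := by
    rintro p q ⟨ha, hb, m, hm⟩ ⟨ha', hb', k, hk⟩
    refine ⟨by simp [ha, ha'], by simp [hb, hb'], m + k, ?_⟩
    simp [ha, hb, ha', hb', hm, hk]
  inv_mem' := by
    rintro p ⟨ha, hb, m, hm⟩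
    exact ⟨by simp [ha], by simp [hb], -m, by simp [hm]⟩

instance : Z.Normal := by
  constructor
  rintro p ⟨ha, hb, m, hm⟩ g
  refine ⟨by simp [ha], by simp [hb], m, ?_⟩
  simp only [mul_x, mul_a, mul_b, inv_a, inv_b, inv_x, ha, hb, hm]
  ring

/-- The center `{0}² × ℝ` of the Heisenberg group. -/
def C : Subgroup Heis where
  carrier := {p | p.a = 0 ∧ p.b = 0}
  one_mem' := ⟨rfl, rfl⟩
  mul_mem' := by rintro p q ⟨ha, hb⟩ ⟨ha', hb'⟩; exact ⟨by simp [ha, ha'], by simp [hb, hb']⟩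
  inv_mem' := by rintro p ⟨ha, hb⟩; exact ⟨by simp [ha], by simp [hb]⟩

end Heis

open Polynomial Matrix in
/-- A torsion unipotent element is the identity. -/
private lemma unip_torsion {A : Type*} [Ring A] [Algebra ℂ A] (M : A)
    (hnil : IsNilpotent (M - 1)) {k : ℕ} (hk : k ≠ 0) (hMk : M ^ k = 1) : M = 1 := by
  have hcomm : ∀ p q : ℂ[X], Commute (aeval M p) (aeval M q) := by
    intro p q
    show _ * _ = _ * _
    rw [← _root_.map_mul, ← _root_.map_mul, mul_comm]
  set S : ℂ[X] := ∑ i ∈ Finset.range k, X ^ i with hSdef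
  have hgeom : S * (X - 1) = X ^ k - 1 := geom_sum_mul X k
  have hroot : (X - Polynomial.C (1 : ℂ)) ∣ (S - Polynomial.C (k : ℂ)) := by
    rw [Polynomial.dvd_iff_isRoot]
    simp [Polynomial.IsRoot, hSdef, Polynomial.eval_finset_sum]
  obtain ⟨T, hT⟩ := hroot
  rw [Polynomial.C_1] at hT
  have hST : S = Polynomial.C (k : ℂ) + (X - 1) * T := by
    have := sub_eq_iff_eq_add.mp hT
    rw [this]; ring
  have hXone : aeval M (X - 1 : ℂ[X]) = M - 1 := by
    simp
  have hNz : (M - 1) * aeval M S = 0 := by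
    have h := congrArg (aeval M) hgeom
    rw [_root_.map_mul, _root_.map_sub, _root_.map_sub, _root_.map_pow, aeval_X, _root_.map_one, hMk, sub_self] at h
    have hc := hcomm S (X - 1)
    rw [hXone] at hc
    rw [← hc, h]
  have hnil' : IsNilpotent (aeval M (X - 1 : ℂ[X])) := by rw [hXone]; exact hnil
  have hSval : aeval M S = algebraMap ℂ A (k : ℂ) + (M - 1) * aeval M T := by
    rw [hST, _root_.map_add, _root_.map_mul, aeval_C, hXone]
  have hUnit : IsUnit (aeval M S) := by
    rw [hSval]
    have h1 : IsUnit (algebraMap ℂ A (k : ℂ)) := by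
      refine IsUnit.map (algebraMap ℂ A) (isUnit_iff_ne_zero.mpr ?_)
      exact_mod_cast hk
    have h2 : IsNilpotent ((M - 1) * aeval M T) := by
      rw [← hXone]
      exact (hcomm (X - 1) T).isNilpotent_mul_right hnil'
    have h3 : Commute ((M - 1) * aeval M T) (algebraMap ℂ A (k : ℂ)) :=
      (Algebra.commutes (k : ℂ) ((M - 1) * aeval M T)).symm
    exact h2.isUnit_add_left_of_commute h1 h3
  have := (IsUnit.mul_left_eq_zero hUnit).mp hNz
  rwa [sub_eq_zero] at this

open Polynomial Matrix in
private lemma eval_charpoly' {m : ℕ} (M : Matrix (Fin m) (Fin m) ℂ) (x : ℂ) :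
    (M.charpoly).eval x = (x • (1 : Matrix (Fin m) (Fin m) ℂ) - M).det := by
  rw [Matrix.charpoly, ← Polynomial.coe_evalRingHom, RingHom.map_det]
  congr 1
  ext i j
  by_cases h : i = j
  · subst h
    simp [Matrix.charmatrix_apply_eq, Matrix.one_apply, Matrix.smul_apply]
  · simp [Matrix.charmatrix_apply_ne _ _ _ h, Matrix.one_apply_ne h, Matrix.smul_apply]

open Polynomial Matrix in
/-- Any continuous rep of `Heis` killing `(0,0,1)` kills the whole center. -/
private lemma central_trivial {m : ℕ} (σ : Heis →* GL (Fin m) ℂ) (hσ : Continuous σ)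
    (hZ : σ ⟨0, 0, 1⟩ = 1) (s : ℝ) : σ ⟨0, 0, s⟩ = 1 := by
  -- the central one-parameter subgroup as a `MonoidHom` from `Multiplicative ℝ`
  have hone : σ ⟨0, 0, 0⟩ = 1 := by
    have : (⟨0, 0, 0⟩ : Heis) = 1 := rfl
    rw [this, _root_.map_one]
  have hmulz : ∀ u t : ℝ, σ ⟨0, 0, u⟩ * σ ⟨0, 0, t⟩ = σ ⟨0, 0, u + t⟩ := by
    intro u t
    rw [← _root_.map_mul]
    congr 1
    ext <;> simp
  have hpow : ∀ (u : ℝ) (j : ℕ), (σ ⟨0, 0, u⟩) ^ j = σ ⟨0, 0, j * u⟩ := by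
    intro u j
    induction j with
    | zero => simpa using hone.symm
    | succ i ih =>
      rw [pow_succ, ih, hmulz]
      norm_num
      ring_nf
  have hneg : ∀ u : ℝ, σ ⟨0, 0, -u⟩ = (σ ⟨0, 0, u⟩)⁻¹ := by
    intro u
    have : (⟨0, 0, -u⟩ : Heis) = (⟨0, 0, u⟩ : Heis)⁻¹ := by ext <;> simp
    rw [this, _root_.map_inv]
  have hint : ∀ j : ℤ, σ ⟨0, 0, (j : ℝ)⟩ = 1 := by
    have hnat : ∀ j : ℕ, σ ⟨0, 0, (j : ℝ)⟩ = 1 := by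
      intro j
      have := hpow 1 j
      rw [hZ, one_pow] at this
      rw [mul_one] at this
      exact this.symm
    intro j
    rcases j with j | j
    · exact_mod_cast hnat j
    · have : ((Int.negSucc j : ℤ) : ℝ) = -((j + 1 : ℕ) : ℝ) := by
        push_cast [Int.negSucc_eq]; ring
      rw [this, hneg, hnat, inv_one]
  -- continuity of the relevant matrix-valued curves
  have hA : Continuous (fun p : Heis => (p.a, p.b, p.x)) := continuous_induced_dom
  have hcurve : ∀ f g h : ℝ → ℝ, Continuous f → Continuous g → Continuous h →
      Continuous (fun t : ℝ => ((σ ⟨f t, g t, h t⟩ : GL (Fin m) ℂ) : Matrix (Fin m) (Fin m) ℂ)) := by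
    intro f g h hf hg hh
    have h1 : Continuous (fun t : ℝ => (⟨f t, g t, h t⟩ : Heis)) := by
      apply continuous_induced_rng.mpr
      exact hf.prodMk (hg.prodMk hh)
    exact Units.continuous_val.comp (hσ.comp h1)
  -- key determinant identity
  have key : ∀ (u : ℝ) (x : ℂ),
      (x • (1 : Matrix (Fin m) (Fin m) ℂ) - (σ ⟨0, 0, u⟩ : Matrix (Fin m) (Fin m) ℂ)).det
        = (x - 1) ^ m := by
    intro u x
    set F : ℝ → ℂ := fun b =>
      (x • (1 : Matrix (Fin m) (Fin m) ℂ) -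
        ((σ ⟨0, 0, u⟩ : Matrix (Fin m) (Fin m) ℂ) * (σ ⟨0, b, 0⟩ : Matrix (Fin m) (Fin m) ℂ))).det
      with hF
    set G : ℝ → ℂ := fun b =>
      (x • (1 : Matrix (Fin m) (Fin m) ℂ) - (σ ⟨0, b, 0⟩ : Matrix (Fin m) (Fin m) ℂ)).det with hG
    have hFc : Continuous F := by
      apply Continuous.matrix_det
      exact continuous_const.sub (continuous_const.mul
        (hcurve (fun _ => 0) id (fun _ => 0) continuous_const continuous_id continuous_const))
    have hGc : Continuous G := by
      apply Continuous.matrix_det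
      exact continuous_const.sub
        (hcurve (fun _ => 0) id (fun _ => 0) continuous_const continuous_id continuous_const)
    have hFG : F = G := by
      apply Continuous.ext_on (dense_compl_singleton (0 : ℝ)) hFc hGc
      intro b hb
      have hb0 : b ≠ 0 := hb
      set A := σ ⟨u / (2 * b), 0, 0⟩ with hAdef
      have hconj : σ ⟨0, 0, u⟩ * σ ⟨0, b, 0⟩ = A * σ ⟨0, b, 0⟩ * A⁻¹ := by
        rw [← _root_.map_inv, ← _root_.map_mul, ← _root_.map_mul, ← _root_.map_mul]
        congr 1
        ext <;> simp <;> field_simp <;> ring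
      have hAA : (A : Matrix (Fin m) (Fin m) ℂ) *
          ((A⁻¹ : GL (Fin m) ℂ) : Matrix (Fin m) (Fin m) ℂ) = 1 := by
        rw [← Units.val_mul, mul_inv_cancel, Units.val_one]
      have hmat : (x • (1 : Matrix (Fin m) (Fin m) ℂ) -
            ((σ ⟨0, 0, u⟩ * σ ⟨0, b, 0⟩ : GL (Fin m) ℂ) : Matrix (Fin m) (Fin m) ℂ))
          = (A : Matrix (Fin m) (Fin m) ℂ) *
            (x • (1 : Matrix (Fin m) (Fin m) ℂ) - (σ ⟨0, b, 0⟩ : Matrix (Fin m) (Fin m) ℂ)) *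
            ((A⁻¹ : GL (Fin m) ℂ) : Matrix (Fin m) (Fin m) ℂ) := by
        have hc : ((σ ⟨0, 0, u⟩ * σ ⟨0, b, 0⟩ : GL (Fin m) ℂ) : Matrix (Fin m) (Fin m) ℂ)
            = (A : Matrix (Fin m) (Fin m) ℂ) * (σ ⟨0, b, 0⟩ : Matrix (Fin m) (Fin m) ℂ) *
              ((A⁻¹ : GL (Fin m) ℂ) : Matrix (Fin m) (Fin m) ℂ) := by
          rw [hconj]; rw [Units.val_mul, Units.val_mul]
        have hexp : (A : Matrix (Fin m) (Fin m) ℂ) *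
            (x • (1 : Matrix (Fin m) (Fin m) ℂ) - (σ ⟨0, b, 0⟩ : Matrix (Fin m) (Fin m) ℂ)) *
            ((A⁻¹ : GL (Fin m) ℂ) : Matrix (Fin m) (Fin m) ℂ)
            = x • ((A : Matrix (Fin m) (Fin m) ℂ) *
                ((A⁻¹ : GL (Fin m) ℂ) : Matrix (Fin m) (Fin m) ℂ)) -
              (A : Matrix (Fin m) (Fin m) ℂ) * (σ ⟨0, b, 0⟩ : Matrix (Fin m) (Fin m) ℂ) *
              ((A⁻¹ : GL (Fin m) ℂ) : Matrix (Fin m) (Fin m) ℂ) := by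
          rw [mul_sub, sub_mul, mul_smul_comm, smul_mul_assoc, mul_one]
        rw [hc, hexp, hAA]
      show F b = G b
      rw [hF, hG]
      simp only
      rw [← Units.val_mul, hmat, Matrix.det_mul, Matrix.det_mul]
      have hdetAA : ((A : Matrix (Fin m) (Fin m) ℂ)).det *
          (((A⁻¹ : GL (Fin m) ℂ) : Matrix (Fin m) (Fin m) ℂ)).det = 1 := by
        rw [← Matrix.det_mul, hAA, Matrix.det_one]
      calc (A : Matrix (Fin m) (Fin m) ℂ).det *
            (x • (1 : Matrix (Fin m) (Fin m) ℂ) - (σ ⟨0, b, 0⟩ : Matrix (Fin m) (Fin m) ℂ)).det *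
            (((A⁻¹ : GL (Fin m) ℂ) : Matrix (Fin m) (Fin m) ℂ)).det
          = ((A : Matrix (Fin m) (Fin m) ℂ).det *
              (((A⁻¹ : GL (Fin m) ℂ) : Matrix (Fin m) (Fin m) ℂ)).det) *
            (x • (1 : Matrix (Fin m) (Fin m) ℂ) - (σ ⟨0, b, 0⟩ : Matrix (Fin m) (Fin m) ℂ)).det := by
            ring
        _ = (x • (1 : Matrix (Fin m) (Fin m) ℂ) - (σ ⟨0, b, 0⟩ : Matrix (Fin m) (Fin m) ℂ)).det := by
            rw [hdetAA, one_mul]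
    have h0 := congrFun hFG 0
    rw [hF, hG] at h0
    simp only at h0
    rw [hone, Units.val_one, mul_one] at h0
    rw [h0]
    have : x • (1 : Matrix (Fin m) (Fin m) ℂ) - 1 = (x - 1) • (1 : Matrix (Fin m) (Fin m) ℂ) := by
      rw [sub_smul, one_smul]
    rw [this, Matrix.det_smul, Matrix.det_one, mul_one, Fintype.card_fin]
  -- charpoly and unipotence
  have hcp : ∀ u : ℝ, ((σ ⟨0, 0, u⟩ : GL (Fin m) ℂ) : Matrix (Fin m) (Fin m) ℂ).charpoly
      = (X - 1) ^ m := by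
    intro u
    apply Polynomial.funext
    intro x
    rw [eval_charpoly', key]
    simp [Polynomial.eval_pow]
  have hnilM : ∀ u : ℝ,
      IsNilpotent (((σ ⟨0, 0, u⟩ : GL (Fin m) ℂ) : Matrix (Fin m) (Fin m) ℂ) - 1) := by
    intro u
    refine ⟨m, ?_⟩
    have h := Matrix.aeval_self_charpoly ((σ ⟨0, 0, u⟩ : GL (Fin m) ℂ) : Matrix (Fin m) (Fin m) ℂ)
    rw [hcp u, _root_.map_pow, _root_.map_sub, aeval_X, _root_.map_one] at h
    exact h
  -- rationals
  have hrat : ∀ r : ℚ, σ ⟨0, 0, (r : ℝ)⟩ = 1 := by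
    intro r
    have hdenR : (r.den : ℝ) * (r : ℝ) = (r.num : ℝ) := by
      rw [Rat.cast_def]
      field_simp
    have hk : r.den ≠ 0 := r.den_nz
    have hMk : (σ ⟨0, 0, (r : ℝ)⟩) ^ r.den = 1 := by
      rw [hpow, hdenR, hint]
    have hMkmat : ((σ ⟨0, 0, (r : ℝ)⟩ : GL (Fin m) ℂ) : Matrix (Fin m) (Fin m) ℂ) ^ r.den = 1 := by
      rw [← Units.val_pow_eq_pow_val, hMk, Units.val_one]
    have := unip_torsion _ (hnilM (r : ℝ)) hk hMkmat
    exact Units.ext (this.trans Units.val_one.symm)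
  -- density
  have hall : (fun t : ℝ => ((σ ⟨0, 0, t⟩ : GL (Fin m) ℂ) : Matrix (Fin m) (Fin m) ℂ))
      = fun _ => (1 : Matrix (Fin m) (Fin m) ℂ) := by
    apply Continuous.ext_on Rat.denseRange_cast
      (hcurve (fun _ => 0) (fun _ => 0) id continuous_const continuous_const continuous_id)
      continuous_const
    rintro t ⟨r, rfl⟩
    show ((σ ⟨0, 0, (r : ℝ)⟩ : GL (Fin m) ℂ) : Matrix (Fin m) (Fin m) ℂ) = 1
    rw [hrat r, Units.val_one]
  exact Units.ext ((congrFun hall s).trans Units.val_one.symm)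


open Matrix in
/-- A one-dimensional character of `Heis` built from an additive functional. -/
private noncomputable def expChar (f : Heis → ℝ) (hf : ∀ p q : Heis, f (p * q) = f p + f q) :
    Heis →* GL (Fin 1) ℂ where
  toFun p := Units.map (algebraMap ℂ (Matrix (Fin 1) (Fin 1) ℂ)).toMonoidHom
      (Units.mk0 ((Real.exp (f p) : ℝ) : ℂ) (by exact_mod_cast Real.exp_ne_zero _))
  map_one' := by
    have h1 : f 1 = 0 := by
      have := hf 1 1
      rw [one_mul] at this
      linarith
    apply Units.ext
    simp [h1]
  map_mul' p q := by
    apply Units.ext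
    simp only [Units.coe_map, Units.val_mul, Units.val_mk0, RingHom.toMonoidHom_eq_coe,
      MonoidHom.coe_coe]
    rw [hf, Real.exp_add, Complex.ofReal_mul, _root_.map_mul]

private lemma expChar_val (f : Heis → ℝ) (hf : ∀ p q : Heis, f (p * q) = f p + f q)
    (p : Heis) : ((expChar f hf p : GL (Fin 1) ℂ) : Matrix (Fin 1) (Fin 1) ℂ)
      = algebraMap ℂ (Matrix (Fin 1) (Fin 1) ℂ) ((Real.exp (f p) : ℝ) : ℂ) := rfl

private lemma expChar_continuous (f : Heis → ℝ) (hf : ∀ p q : Heis, f (p * q) = f p + f q)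
    (hc : Continuous f) : Continuous (expChar f hf) := by
  rw [Units.continuous_iff]
  constructor
  · have : (Units.val ∘ ⇑(expChar f hf)) = fun p : Heis =>
        algebraMap ℂ (Matrix (Fin 1) (Fin 1) ℂ) ((Real.exp (f p) : ℝ) : ℂ) := rfl
    rw [this]
    exact (continuous_algebraMap ℂ _).comp
      (Complex.continuous_ofReal.comp (Real.continuous_exp.comp hc))
  · have : (fun p : Heis => (((expChar f hf p)⁻¹ : GL (Fin 1) ℂ) : Matrix (Fin 1) (Fin 1) ℂ)) = fun p : Heis =>
        algebraMap ℂ (Matrix (Fin 1) (Fin 1) ℂ) ((Real.exp (-(f p)) : ℝ) : ℂ) := by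
      funext p
      have hfinv : f p⁻¹ = -(f p) := by
        have h1 : f 1 = 0 := by
          have := hf 1 1
          rw [one_mul] at this
          linarith
        have h2 := hf p p⁻¹
        rw [mul_inv_cancel, h1] at h2
        linarith
      rw [← _root_.map_inv (expChar f hf), expChar_val, hfinv]
    rw [this]
    exact (continuous_algebraMap ℂ _).comp
      (Complex.continuous_ofReal.comp (Real.continuous_exp.comp hc.neg))

private lemma expChar_eq_one (f : Heis → ℝ) (hf : ∀ p q : Heis, f (p * q) = f p + f q)
    (p : Heis) (h : expChar f hf p = 1) : f p = 0 := by
  have hval : algebraMap ℂ (Matrix (Fin 1) (Fin 1) ℂ) ((Real.exp (f p) : ℝ) : ℂ)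
      = algebraMap ℂ (Matrix (Fin 1) (Fin 1) ℂ) 1 := by
    rw [_root_.map_one, ← expChar_val f hf, h, Units.val_one]
  have h2 : ((Real.exp (f p) : ℝ) : ℂ) = 1 := (algebraMap ℂ _).injective hval
  have h3 : Real.exp (f p) = 1 := by exact_mod_cast h2
  have := Real.exp_injective (by rw [h3, Real.exp_zero] : Real.exp (f p) = Real.exp 0)
  exact this


/-- `KO(H/Z)` is exactly the central circle `({0}² × ℝ)/Z ≅ ℝ/ℤ`. -/
theorem KO_Heisenberg_mod_Z :
    KO (Heis ⧸ Heis.Z) = Heis.C.map (QuotientGroup.mk' Heis.Z) := by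
  apply le_antisymm
  · -- `KO ≤` image of the center
    intro g hg
    simp only [KO, Subgroup.mem_iInf] at hg
    obtain ⟨p, rfl⟩ := QuotientGroup.mk'_surjective Heis.Z g
    have hfa : ∀ p q : Heis, (p * q).a = p.a + q.a := fun _ _ => rfl
    have hfb : ∀ p q : Heis, (p * q).b = p.b + q.b := fun _ _ => rfl
    have hemb : Continuous (fun p : Heis => (p.a, p.b, p.x)) := continuous_induced_dom
    have hconta : Continuous (fun p : Heis => p.a) := continuous_fst.comp hemb
    have hcontb : Continuous (fun p : Heis => p.b) :=
      (continuous_fst.comp continuous_snd).comp hemb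
    have key : ∀ (f : Heis → ℝ) (hf : ∀ p q : Heis, f (p * q) = f p + f q),
        Continuous f → (∀ z ∈ Heis.Z, f z = 0) → f p = 0 := by
      intro f hf hc hz
      have hker : Heis.Z ≤ (expChar f hf).ker := by
        intro z hzz
        rw [MonoidHom.mem_ker]
        apply Units.ext
        rw [expChar_val, hz z hzz, Units.val_one]
        simp
      have hcomp : ⇑(QuotientGroup.lift Heis.Z (expChar f hf) hker) ∘
          (QuotientGroup.mk : Heis → Heis ⧸ Heis.Z) = ⇑(expChar f hf) := by
        funext q
        rfl
      have hcont : Continuous (QuotientGroup.lift Heis.Z (expChar f hf) hker) := by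
        rw [(QuotientGroup.isQuotientMap_mk Heis.Z).continuous_iff]
        show Continuous (⇑(QuotientGroup.lift Heis.Z (expChar f hf) hker) ∘
          (QuotientGroup.mk : Heis → Heis ⧸ Heis.Z))
        rw [hcomp]
        exact expChar_continuous f hf hc
      have h1 : (QuotientGroup.lift Heis.Z (expChar f hf) hker)
          ((QuotientGroup.mk' Heis.Z) p) = 1 :=
        MonoidHom.mem_ker.mp (hg 1 (QuotientGroup.lift Heis.Z (expChar f hf) hker) hcont)
      have h2 : expChar f hf p = 1 := by
        rw [← h1]
        rfl
      exact expChar_eq_one f hf p h2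
    have ha : p.a = 0 := key _ hfa hconta (fun z hz => hz.1)
    have hb : p.b = 0 := key _ hfb hcontb (fun z hz => hz.2.1)
    exact ⟨p, ⟨ha, hb⟩, rfl⟩
  · -- image of the center `≤ KO`
    rintro g ⟨c, hcC, rfl⟩
    obtain ⟨hca, hcb⟩ := hcC
    simp only [KO, Subgroup.mem_iInf]
    intro k ρ hρ
    rw [MonoidHom.mem_ker]
    have hσc : Continuous (ρ.comp (QuotientGroup.mk' Heis.Z)) :=
      hρ.comp QuotientGroup.continuous_mk
    have hZ1 : (ρ.comp (QuotientGroup.mk' Heis.Z)) ⟨0, 0, 1⟩ = 1 := by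
      have h1 : (QuotientGroup.mk' Heis.Z) ⟨0, 0, 1⟩ = 1 :=
        (QuotientGroup.eq_one_iff _).mpr ⟨rfl, rfl, 1, by norm_num⟩
      rw [MonoidHom.comp_apply, h1, _root_.map_one]
    have hcen := central_trivial (ρ.comp (QuotientGroup.mk' Heis.Z)) hσc hZ1 c.x
    have hcx : c = (⟨0, 0, c.x⟩ : Heis) := by
      ext <;> simp [hca, hcb]
    have hfinal : (ρ.comp (QuotientGroup.mk' Heis.Z)) c = 1 := by
      rw [hcx]; exact hcen
    exact hfinal
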